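/- Let S = [0,1] with the Euclidean metric and let μ_n be the finite signed Borel measure on [0,1] with density x ↦ n·sin(2πnx) with respect to Lebesgue measure. Then the sequence of total variation norms ‖μ_n‖_TV is unbounded, and the sequence of dual bounded Lipschitz norms ‖μ_n‖*_BL does not converge to 0 as n → ∞; in particular, for each n there exists g_n : [0,1] → ℝ with Lipschitz constant 1 and ‖g_n‖_∞ ≤ 1/(4n) such that ∫_0^1 g_n(x)·n·sin(2πnx) dx = 1/π². -/

import Mathlib

open MeasureTheory Filter Topology intervalIntegral Real

/-- The pairing of the signed measure on `[0,1]` with density `x ↦ n·sin(2πnx)` (with respect to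
Lebesgue measure) with a function `g`. -/
noncomputable def pair01 (n : ℕ) (g : ℝ → ℝ) : ℝ :=
  ∫ x in (0:ℝ)..1, g x * ((n : ℝ) * Real.sin (2 * Real.pi * (n : ℝ) * x))

/-- The dual bounded Lipschitz norm `‖μ_n‖*_BL` of that measure:
the supremum of `|⟨μ_n, g⟩|` over bounded Lipschitz `g : [0,1] → ℝ` with
`‖g‖_∞ + |g|_L ≤ 1`. -/
noncomputable def blStar01 (n : ℕ) : ℝ :=
  sSup {r : ℝ | ∃ (g : ℝ → ℝ) (C : ℝ) (K : NNReal),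
    (∀ x ∈ Set.Icc (0:ℝ) 1, |g x| ≤ C) ∧ LipschitzOnWith K g (Set.Icc (0:ℝ) 1) ∧
    C + (K : ℝ) ≤ 1 ∧ r = |pair01 n g|}

noncomputable def tri (u : ℝ) : ℝ := 1/4 - |u - 1/4 - round (u - 1/4)|

lemma abs_sub_round_le (x : ℝ) (m : ℤ) : |x - round x| ≤ |x - m| := by
  rcases eq_or_ne m (round x) with h | h
  · simp [h]
  · have h1 : (1 : ℝ) ≤ |(m : ℝ) - round x| := by
      have : (m : ℝ) - round x = ((m - round x : ℤ) : ℝ) := by push_cast; ring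
      rw [this, ← Int.cast_abs]
      exact_mod_cast Int.one_le_abs (sub_ne_zero.mpr h)
    have h2 := abs_sub_round x
    have h3 : |(m:ℝ) - round x| ≤ |x - m| + |x - round x| := by
      calc |(m:ℝ) - round x| = |(x - round x) - (x - m)| := by ring_nf
        _ ≤ |x - round x| + |x - m| := abs_sub _ _
        _ = |x - m| + |x - round x| := by ring
    linarith

lemma lipschitz_fr : LipschitzWith 1 (fun x : ℝ => |x - round x|) := by
  rw [lipschitzWith_iff_dist_le_mul]
  intro a b
  simp only [Real.dist_eq, NNReal.coe_one, one_mul]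
  have key : ∀ u v : ℝ, |u - round u| - |v - round v| ≤ |u - v| := by
    intro u v
    have h1 : |u - round u| ≤ |u - round v| := abs_sub_round_le u (round v)
    have h2 : |u - (round v : ℝ)| ≤ |u - v| + |v - round v| := by
      calc |u - (round v:ℝ)| = |(u - v) + (v - round v)| := by ring_nf
        _ ≤ |u - v| + |v - round v| := abs_add_le _ _
    linarith
  rw [abs_sub_le_iff]
  constructor
  · exact key a b
  · simpa [abs_sub_comm a b] using key b a

lemma lipschitz_tri : LipschitzWith 1 tri := by
  rw [lipschitzWith_iff_dist_le_mul]
  intro a b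
  have := lipschitzWith_iff_dist_le_mul.mp lipschitz_fr (a - 1/4) (b - 1/4)
  simp only [Real.dist_eq, NNReal.coe_one, one_mul] at this ⊢
  unfold tri
  have e : a - 1/4 - (b - 1/4) = a - b := by ring
  rw [e] at this
  calc |1/4 - |a - 1/4 - round (a - 1/4)| - (1/4 - |b - 1/4 - round (b - 1/4)|)|
      = |(|b - 1/4 - round (b - 1/4)|) - (|a - 1/4 - round (a - 1/4)|)| := by ring_nf
    _ = |(|a - 1/4 - round (a - 1/4)|) - (|b - 1/4 - round (b - 1/4)|)| := abs_sub_comm _ _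
    _ ≤ |a - b| := this

lemma tri_abs_le (u : ℝ) : |tri u| ≤ 1/4 := by
  have h1 : |u - 1/4 - round (u - 1/4)| ≤ 1/2 := abs_sub_round _
  have h2 : (0:ℝ) ≤ |u - 1/4 - round (u - 1/4)| := abs_nonneg _
  rw [abs_le]; unfold tri; constructor <;> linarith

lemma tri_periodic : Function.Periodic tri 1 := by
  intro u
  unfold tri
  have : u + 1 - 1/4 = (u - 1/4) + (1:ℤ) := by push_cast; ring
  rw [this, round_add_intCast]
  push_cast
  ring_nf

lemma round_eval (v : ℝ) (m : ℤ) (h1 : (m:ℝ) - 1/2 ≤ v) (h2 : v < (m:ℝ) + 1/2) :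
    round v = m := by
  rw [round_eq, Int.floor_eq_iff]
  constructor <;> [push_cast; push_cast] <;> linarith

lemma tri_eq1 {u : ℝ} (h : u ∈ Set.Icc (0:ℝ) (1/4)) : tri u = u := by
  obtain ⟨h1, h2⟩ := h
  have : round (u - 1/4) = 0 := round_eval _ 0 (by push_cast; linarith) (by push_cast; linarith)
  unfold tri
  rw [this]
  rw [abs_of_nonpos (by push_cast; linarith)]
  push_cast; ring

lemma tri_eq2 {u : ℝ} (h : u ∈ Set.Icc (1/4:ℝ) (3/4)) : tri u = 1/2 - u := by
  obtain ⟨h1, h2⟩ := h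
  rcases lt_or_eq_of_le h2 with h2' | h2'
  · have : round (u - 1/4) = 0 := round_eval _ 0 (by push_cast; linarith) (by push_cast; linarith)
    unfold tri
    rw [this, abs_of_nonneg (by push_cast; linarith)]
    push_cast; ring
  · subst h2'
    have : round ((3:ℝ)/4 - 1/4) = 1 := round_eval _ 1 (by push_cast; linarith) (by push_cast; linarith)
    unfold tri
    rw [this, abs_of_nonpos (by push_cast; linarith)]
    push_cast; ring

lemma tri_eq3 {u : ℝ} (h : u ∈ Set.Icc (3/4:ℝ) 1) : tri u = u - 1 := by
  obtain ⟨h1, h2⟩ := h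
  have : round (u - 1/4) = 1 := round_eval _ 1 (by push_cast; linarith) (by push_cast; linarith)
  unfold tri
  rw [this, abs_of_nonpos (by push_cast; linarith)]
  push_cast; ring

lemma hasDerivAt_sin2pi (u : ℝ) :
    HasDerivAt (fun u : ℝ => Real.sin (2*π*u)) (2*π*Real.cos (2*π*u)) u := by
  have h := (Real.hasDerivAt_sin (2*π*u)).comp u ((hasDerivAt_id u).const_mul (2*π))
  simpa [Function.comp_def, mul_comm] using h

lemma hasDerivAt_cos2pi (u : ℝ) :
    HasDerivAt (fun u : ℝ => Real.cos (2*π*u)) (-(2*π*Real.sin (2*π*u))) u := by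
  have h := (Real.hasDerivAt_cos (2*π*u)).comp u ((hasDerivAt_id u).const_mul (2*π))
  simpa [Function.comp_def, mul_comm] using h

noncomputable def Fa (u : ℝ) : ℝ := Real.sin (2*π*u)/(2*π)^2 - u * Real.cos (2*π*u)/(2*π)

lemma hasDerivAt_Fa (u : ℝ) : HasDerivAt Fa (u * Real.sin (2*π*u)) u := by
  have h1 := (hasDerivAt_sin2pi u).div_const ((2*π)^2)
  have h2 := ((hasDerivAt_id u).mul (hasDerivAt_cos2pi u)).div_const (2*π)
  have h := h1.sub h2
  apply HasDerivAt.congr_deriv h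
  have hπ := Real.pi_ne_zero
  field_simp
  simp only [id]
  ring

lemma cont1 : Continuous fun u : ℝ => u * Real.sin (2*π*u) := by continuity

lemma int1 : ∫ u in (0:ℝ)..(1/4), u * Real.sin (2*π*u) = 1/(4*π^2) := by
  rw [integral_eq_sub_of_hasDerivAt (fun u _ => hasDerivAt_Fa u)
    (cont1.intervalIntegrable _ _)]
  unfold Fa
  rw [show 2*π*(1/4) = π/2 by ring]
  have hπ := Real.pi_ne_zero
  simp [Real.sin_pi_div_two, Real.cos_pi_div_two]
  field_simp
  ring

noncomputable def Fb (u : ℝ) : ℝ := -Real.cos (2*π*u)/(4*π) - Fa u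

lemma hasDerivAt_Fb (u : ℝ) : HasDerivAt Fb ((1/2 - u) * Real.sin (2*π*u)) u := by
  have h1 := ((hasDerivAt_cos2pi u).neg).div_const (4*π)
  have h := h1.sub (hasDerivAt_Fa u)
  apply HasDerivAt.congr_deriv h
  have hπ := Real.pi_ne_zero
  field_simp
  ring

lemma cont2 : Continuous fun u : ℝ => (1/2 - u) * Real.sin (2*π*u) := by continuity

lemma int2 : ∫ u in (1/4:ℝ)..(3/4), (1/2 - u) * Real.sin (2*π*u) = 1/(2*π^2) := by
  rw [integral_eq_sub_of_hasDerivAt (fun u _ => hasDerivAt_Fb u)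
    (cont2.intervalIntegrable _ _)]
  unfold Fb Fa
  rw [show 2*π*(3/4) = π + π/2 by ring, show 2*π*(1/4) = π/2 by ring,
    Real.cos_add, Real.sin_add]
  have hπ := Real.pi_ne_zero
  simp [Real.sin_pi_div_two, Real.cos_pi_div_two]
  field_simp
  ring

noncomputable def Fc (u : ℝ) : ℝ := Fa u + Real.cos (2*π*u)/(2*π)

lemma hasDerivAt_Fc (u : ℝ) : HasDerivAt Fc ((u - 1) * Real.sin (2*π*u)) u := by
  have h := (hasDerivAt_Fa u).add ((hasDerivAt_cos2pi u).div_const (2*π))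
  apply HasDerivAt.congr_deriv h
  have hπ := Real.pi_ne_zero
  field_simp
  ring

lemma cont3 : Continuous fun u : ℝ => (u - 1) * Real.sin (2*π*u) := by continuity

lemma int3 : ∫ u in (3/4:ℝ)..1, (u - 1) * Real.sin (2*π*u) = 1/(4*π^2) := by
  rw [integral_eq_sub_of_hasDerivAt (fun u _ => hasDerivAt_Fc u)
    (cont3.intervalIntegrable _ _)]
  unfold Fc Fa
  rw [show 2*π*(3/4) = π + π/2 by ring, show 2*π*1 = 2*π by ring,
    Real.cos_add, Real.sin_add, Real.cos_two_pi, Real.sin_two_pi]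
  have hπ := Real.pi_ne_zero
  simp [Real.sin_pi_div_two, Real.cos_pi_div_two]
  field_simp
  ring

lemma tri_continuous : Continuous tri := lipschitz_tri.continuous

lemma contf : Continuous (fun u : ℝ => tri u * Real.sin (2*π*u)) :=
  tri_continuous.mul (by continuity)

lemma I_eq : ∫ u in (0:ℝ)..1, tri u * Real.sin (2*π*u) = 1/π^2 := by
  have hi : ∀ a b : ℝ, IntervalIntegrable (fun u : ℝ => tri u * Real.sin (2*π*u)) volume a b :=
    fun a b => contf.intervalIntegrable a b
  have h1 : ∫ u in (0:ℝ)..(1/4), tri u * Real.sin (2*π*u) = 1/(4*π^2) := by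
    rw [← int1]
    apply intervalIntegral.integral_congr
    intro u hu
    rw [Set.uIcc_of_le (by norm_num)] at hu
    simp only []
    rw [tri_eq1 hu]
  have h2 : ∫ u in (1/4:ℝ)..(3/4), tri u * Real.sin (2*π*u) = 1/(2*π^2) := by
    rw [← int2]
    apply intervalIntegral.integral_congr
    intro u hu
    rw [Set.uIcc_of_le (by norm_num)] at hu
    simp only []
    rw [tri_eq2 hu]
  have h3 : ∫ u in (3/4:ℝ)..1, tri u * Real.sin (2*π*u) = 1/(4*π^2) := by
    rw [← int3]
    apply intervalIntegral.integral_congr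
    intro u hu
    rw [Set.uIcc_of_le (by norm_num)] at hu
    simp only []
    rw [tri_eq3 hu]
  rw [← intervalIntegral.integral_add_adjacent_intervals (hi 0 (1/4)) (hi (1/4) 1),
      ← intervalIntegral.integral_add_adjacent_intervals (hi (1/4) (3/4)) (hi (3/4) 1),
      h1, h2, h3]
  have hπ := Real.pi_ne_zero
  field_simp
  ring

lemma tri_sin_periodic : Function.Periodic (fun u : ℝ => tri u * Real.sin (2*π*u)) 1 := by
  intro u
  simp only
  rw [tri_periodic u, show 2*π*(u+1) = 2*π*u + 2*π by ring, Real.sin_add_two_pi]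

lemma key (n : ℕ) (hn : 1 ≤ n) :
    ∫ x in (0:ℝ)..1, tri ((n:ℝ)*x) * Real.sin (2*π*((n:ℝ)*x)) = 1/π^2 := by
  have hc : (n:ℝ) ≠ 0 := by positivity
  have hi : ∀ a b : ℝ, IntervalIntegrable (fun u : ℝ => tri u * Real.sin (2*π*u)) volume a b :=
    fun a b => contf.intervalIntegrable a b
  rw [intervalIntegral.integral_comp_mul_left (fun u : ℝ => tri u * Real.sin (2*π*u)) hc]
  have h2 := tri_sin_periodic.intervalIntegral_add_zsmul_eq (n:ℤ) 0 hi
  simp only [zero_add, zsmul_eq_mul, Int.cast_natCast, smul_eq_mul, mul_one] at h2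
  rw [mul_zero, mul_one, h2, I_eq, smul_eq_mul]
  field_simp

lemma lip_scaled (n : ℕ) (c : ℝ) (K : NNReal) (hc : 0 ≤ c) (hcn : c * (n:ℝ) ≤ (K:ℝ)) :
    LipschitzWith K (fun x : ℝ => c * tri ((n:ℝ)*x)) := by
  rw [lipschitzWith_iff_dist_le_mul]
  intro a b
  have h := lipschitzWith_iff_dist_le_mul.mp lipschitz_tri ((n:ℝ)*a) ((n:ℝ)*b)
  simp only [Real.dist_eq, NNReal.coe_one, one_mul] at h ⊢
  have e1 : c * tri ((n:ℝ)*a) - c * tri ((n:ℝ)*b) = c * (tri ((n:ℝ)*a) - tri ((n:ℝ)*b)) := by ring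
  have e2 : (n:ℝ)*a - (n:ℝ)*b = (n:ℝ) * (a - b) := by ring
  rw [e1, abs_mul, abs_of_nonneg hc]
  rw [e2, abs_mul, abs_of_nonneg (by positivity : (0:ℝ) ≤ (n:ℝ))] at h
  calc c * |tri ((n:ℝ)*a) - tri ((n:ℝ)*b)| ≤ c * ((n:ℝ) * |a - b|) :=
        mul_le_mul_of_nonneg_left h hc
    _ = (c * (n:ℝ)) * |a - b| := by ring
    _ ≤ (K:ℝ) * |a - b| := mul_le_mul_of_nonneg_right hcn (abs_nonneg _)

lemma pair_scaled (n : ℕ) (hn : 1 ≤ n) (c : ℝ) :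
    pair01 n (fun x => c * tri ((n:ℝ)*x)) = c * (n:ℝ) * (1/π^2) := by
  unfold pair01
  calc (∫ x in (0:ℝ)..1, (c * tri ((n:ℝ)*x)) * ((n:ℝ) * Real.sin (2*π*(n:ℝ)*x)))
      = ∫ x in (0:ℝ)..1, (c * (n:ℝ)) * (tri ((n:ℝ)*x) * Real.sin (2*π*((n:ℝ)*x))) := by
        apply intervalIntegral.integral_congr
        intro x _
        simp only
        rw [show 2*π*((n:ℝ)*x) = 2*π*(n:ℝ)*x by ring]
        ring
    _ = (c * (n:ℝ)) * ∫ x in (0:ℝ)..1, tri ((n:ℝ)*x) * Real.sin (2*π*((n:ℝ)*x)) :=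
        intervalIntegral.integral_const_mul _ _
    _ = c * (n:ℝ) * (1/π^2) := by rw [key n hn]

lemma bl_lower (n : ℕ) (hn : 1 ≤ n) : 1/(2*π^2) ≤ blStar01 n := by
  have hπ := Real.pi_pos
  have hn0 : (0:ℝ) < (n:ℝ) := by positivity
  have hhalf : ((1/2 : NNReal) : ℝ) = 1/2 := by norm_num
  apply le_csSup
  · refine ⟨(n:ℝ), ?_⟩
    rintro r ⟨g, C, K, hb, _, hck, rfl⟩
    have hC1 : C ≤ 1 := by
      have : (0:ℝ) ≤ (K:ℝ) := K.coe_nonneg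
      linarith
    have h := intervalIntegral.norm_integral_le_of_norm_le_const
      (C := (n:ℝ)) (f := fun x => g x * ((n : ℝ) * Real.sin (2*π*(n:ℝ)*x)))
      (a := (0:ℝ)) (b := 1) ?_
    · simpa [pair01, Real.norm_eq_abs] using h
    · intro x hx
      rw [Set.uIoc_of_le (by norm_num)] at hx
      have hx' : x ∈ Set.Icc (0:ℝ) 1 := ⟨le_of_lt hx.1, hx.2⟩
      have h1 : |g x| ≤ 1 := le_trans (hb x hx') hC1
      have h2 : |Real.sin (2*π*(n:ℝ)*x)| ≤ 1 := Real.abs_sin_le_one _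
      rw [Real.norm_eq_abs, abs_mul, abs_mul, abs_of_nonneg hn0.le]
      calc |g x| * ((n:ℝ) * |Real.sin (2*π*(n:ℝ)*x)|)
          ≤ 1 * ((n:ℝ) * 1) := by
            apply mul_le_mul h1 _ (by positivity) (by norm_num)
            exact mul_le_mul_of_nonneg_left h2 hn0.le
        _ = (n:ℝ) := by ring
  · refine ⟨fun x => (2*(n:ℝ))⁻¹ * tri ((n:ℝ)*x), 1/2, 1/2, ?_, ?_, ?_, ?_⟩
    · intro x _
      rw [abs_mul, abs_of_nonneg (by positivity : (0:ℝ) ≤ (2*(n:ℝ))⁻¹)]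
      have h1 : |tri ((n:ℝ)*x)| ≤ 1/4 := tri_abs_le _
      have h2 : (2*(n:ℝ))⁻¹ ≤ 1/2 := by
        have hn1 : (1:ℝ) ≤ (n:ℝ) := by exact_mod_cast hn
        rw [inv_le_comm₀ (by positivity) (by norm_num)]
        linarith
      calc (2*(n:ℝ))⁻¹ * |tri ((n:ℝ)*x)| ≤ (1/2) * (1/4) :=
            mul_le_mul h2 h1 (abs_nonneg _) (by norm_num)
        _ ≤ 1/2 := by norm_num
    · have hcn : (2*(n:ℝ))⁻¹ * (n:ℝ) ≤ ((1/2 : NNReal) : ℝ) := by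
        rw [hhalf, show (2*(n:ℝ))⁻¹ * (n:ℝ) = 1/2 by field_simp]
      exact (lip_scaled n _ _ (by positivity) hcn).lipschitzOnWith
    · rw [hhalf]; norm_num
    · rw [pair_scaled n hn,
        show (2*(n:ℝ))⁻¹ * (n:ℝ) * (1/π^2) = 1/(2*π^2) by field_simp,
        abs_of_nonneg (by positivity)]

lemma sinsq (n : ℕ) (hn : 1 ≤ n) :
    ∫ x in (0:ℝ)..1, Real.sin (2*π*(n:ℝ)*x) ^ 2 = 1/2 := by
  have hπ := Real.pi_pos
  have hn0 : (0:ℝ) < (n:ℝ) := by positivity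
  have hc : (2*π*(n:ℝ)) ≠ 0 := by positivity
  have h := intervalIntegral.integral_comp_mul_left (a := (0:ℝ)) (b := 1)
    (fun t : ℝ => Real.sin t ^ 2) hc
  simp only [mul_zero, mul_one] at h
  rw [h, integral_sin_sq]
  have hs : Real.sin (2*π*(n:ℝ)) = 0 := by
    rw [show 2*π*(n:ℝ) = ((2*n : ℕ):ℝ)*π by push_cast; ring]
    exact Real.sin_nat_mul_pi (2*n)
  rw [hs, Real.sin_zero, smul_eq_mul]
  field_simp
  ring

lemma tv_lower (n : ℕ) (hn : 1 ≤ n) :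
    (n:ℝ)/2 ≤ ∫ x in (0:ℝ)..1, |(n:ℝ) * Real.sin (2*π*(n:ℝ)*x)| := by
  have hn0 : (0:ℝ) < (n:ℝ) := by positivity
  have hle : ∀ x ∈ Set.Icc (0:ℝ) 1,
      (n:ℝ) * Real.sin (2*π*(n:ℝ)*x) ^ 2 ≤ |(n:ℝ) * Real.sin (2*π*(n:ℝ)*x)| := by
    intro x _
    rw [abs_mul, abs_of_nonneg hn0.le]
    apply mul_le_mul_of_nonneg_left _ hn0.le
    have h1 : |Real.sin (2*π*(n:ℝ)*x)| ≤ 1 := Real.abs_sin_le_one _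
    calc Real.sin (2*π*(n:ℝ)*x) ^ 2 = |Real.sin (2*π*(n:ℝ)*x)| ^ 2 := (sq_abs _).symm
      _ ≤ |Real.sin (2*π*(n:ℝ)*x)| := by nlinarith [abs_nonneg (Real.sin (2*π*(n:ℝ)*x))]
  have hi1 : IntervalIntegrable (fun x : ℝ => (n:ℝ) * Real.sin (2*π*(n:ℝ)*x) ^ 2)
      volume 0 1 := (by continuity : Continuous _).intervalIntegrable _ _
  have hi2 : IntervalIntegrable (fun x : ℝ => |(n:ℝ) * Real.sin (2*π*(n:ℝ)*x)|)
      volume 0 1 := (by continuity : Continuous _).intervalIntegrable _ _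
  have hmono := intervalIntegral.integral_mono_on (by norm_num : (0:ℝ) ≤ 1) hi1 hi2 hle
  have hval : ∫ x in (0:ℝ)..1, (n:ℝ) * Real.sin (2*π*(n:ℝ)*x) ^ 2 = (n:ℝ)/2 := by
    rw [intervalIntegral.integral_const_mul, sinsq n hn]
    ring
  linarith [hmono, hval.ge, hval.le]

/-- For `μ_n` the signed measure on `[0,1]` with density `x ↦ n·sin(2πnx)`:
the total variation norms `‖μ_n‖_TV = ∫_0^1 |n·sin(2πnx)| dx` are unbounded, the dual bounded
Lipschitz norms `‖μ_n‖*_BL` do not converge to `0`, and for each `n ≥ 1` there is `g_n` with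
Lipschitz constant `1` and `‖g_n‖_∞ ≤ 1/(4n)` on `[0,1]` such that `⟨μ_n, g_n⟩ = 1/π²`. -/
theorem sin_density_counterexample :
    (¬ ∃ C : ℝ, ∀ n : ℕ,
        (∫ x in (0:ℝ)..1, |(n : ℝ) * Real.sin (2 * Real.pi * (n : ℝ) * x)|) ≤ C) ∧
    (¬ Tendsto blStar01 atTop (𝓝 0)) ∧
    (∀ n : ℕ, 1 ≤ n → ∃ g : ℝ → ℝ, LipschitzOnWith 1 g (Set.Icc (0:ℝ) 1) ∧
      (∀ x ∈ Set.Icc (0:ℝ) 1, |g x| ≤ 1 / (4 * (n : ℝ))) ∧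
      pair01 n g = 1 / Real.pi ^ 2) := by
  have hπ := Real.pi_pos
  refine ⟨?_, ?_, ?_⟩
  · rintro ⟨C, hC⟩
    obtain ⟨n, hn⟩ := exists_nat_gt (2*C)
    have h1 : ((n+1 : ℕ):ℝ)/2 ≤ ∫ x in (0:ℝ)..1,
        |((n+1 : ℕ) : ℝ) * Real.sin (2*π*((n+1 : ℕ):ℝ)*x)| := tv_lower (n+1) (by omega)
    have h2 := hC (n+1)
    push_cast at h1 h2 hn
    linarith
  · intro ht
    have h0 : (0:ℝ) < 1/(2*π^2) := by positivity
    have h := ht.eventually (gt_mem_nhds h0)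
    obtain ⟨n, hn1, hn2⟩ := ((eventually_ge_atTop 1).and h).exists
    exact absurd (bl_lower n hn1) (not_le.mpr hn2)
  · intro n hn
    have hn0 : (0:ℝ) < (n:ℝ) := by positivity
    refine ⟨fun x => (n:ℝ)⁻¹ * tri ((n:ℝ)*x), ?_, ?_, ?_⟩
    · have hcn : (n:ℝ)⁻¹ * (n:ℝ) ≤ ((1 : NNReal) : ℝ) := by
        rw [inv_mul_cancel₀ hn0.ne']
        norm_num
      exact (lip_scaled n _ _ (by positivity) hcn).lipschitzOnWith
    · intro x _
      rw [abs_mul, abs_of_nonneg (by positivity : (0:ℝ) ≤ (n:ℝ)⁻¹)]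
      have h1 : |tri ((n:ℝ)*x)| ≤ 1/4 := tri_abs_le _
      calc (n:ℝ)⁻¹ * |tri ((n:ℝ)*x)| ≤ (n:ℝ)⁻¹ * (1/4) :=
            mul_le_mul_of_nonneg_left h1 (by positivity)
        _ = 1/(4*(n:ℝ)) := by field_simp
    · rw [pair_scaled n hn, inv_mul_cancel₀ hn0.ne']
      ring
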